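/- (Partial-field model.) If each magnetic field vector has the form M_i = (M_{i,1},…,M_{i,r}, 0,…,0) for a fixed 0 ≤ r ≤ q, then Z(G) = V(G, ω; {X_M}, {e^{β J_{a,b}} − 1}_{{a,b}∈E(G)}), where ω(v_i) = M_i and X_M = (q − r) + Σ_{α=1}^r e^{β M_α}. -/

import Mathlib

open Finset

structure WGraph (S : Type) (L : Type) where
  V : Type
  E : Type
  [fV : Fintype V]
  [dV : DecidableEq V]
  [fE : Fintype E]
  [dE : DecidableEq E]
  ends : E → V × V
  ω : V → S
  γ : E → L

attribute [instance] WGraph.fV WGraph.dV WGraph.fE WGraph.dE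

namespace WGraph
variable {S L : Type}

def IsLoop (G : WGraph S L) (e : G.E) : Prop := (G.ends e).1 = (G.ends e).2

def delete (G : WGraph S L) (e₀ : G.E) : WGraph S L where
  V := G.V
  E := {e : G.E // e ≠ e₀}
  ends := fun e => G.ends e.1
  ω := G.ω
  γ := fun e => G.γ e.1

def contract [Add S] (G : WGraph S L) (e₀ : G.E) (h : ¬ G.IsLoop e₀) : WGraph S L where
  V := {v : G.V // v ≠ (G.ends e₀).2}
  E := {e : G.E // e ≠ e₀}
  ends := fun e =>
    ((if hv : (G.ends e.1).1 = (G.ends e₀).2 then ⟨(G.ends e₀).1, h⟩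
        else ⟨(G.ends e.1).1, hv⟩ : {v : G.V // v ≠ (G.ends e₀).2}),
     (if hv : (G.ends e.1).2 = (G.ends e₀).2 then ⟨(G.ends e₀).1, h⟩
        else ⟨(G.ends e.1).2, hv⟩))
  ω := fun v =>
    if v.1 = (G.ends e₀).1 then G.ω (G.ends e₀).1 + G.ω (G.ends e₀).2 else G.ω v.1
  γ := fun e => G.γ e.1

def mapEdges {L' : Type} (G : WGraph S L) (φ : L → L') : WGraph S L' where
  V := G.V
  E := G.E
  ends := G.ends
  ω := G.ω
  γ := φ ∘ G.γ

def stateGraph (G : WGraph S L) (A : Finset G.E) : SimpleGraph G.V :=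
  SimpleGraph.fromRel (fun v w => ∃ e ∈ A, G.ends e = (v, w))

noncomputable instance (G : WGraph S L) (A : Finset G.E) :
    Fintype (G.stateGraph A).ConnectedComponent := Fintype.ofFinite _

noncomputable def kcomp (G : WGraph S L) (A : Finset G.E) : ℕ :=
  Fintype.card (G.stateGraph A).ConnectedComponent

open scoped Classical in
noncomputable def compWeight [AddCommMonoid S] (G : WGraph S L) (A : Finset G.E)
    (c : (G.stateGraph A).ConnectedComponent) : S :=
  ∑ v ∈ Finset.univ.filter (fun v => (G.stateGraph A).connectedComponentMk v = c), G.ω v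

end WGraph

/-- The variable-field q-state Potts Hamiltonian:
`h(σ) = -Σ_{e={i,j}} J_e δ(σ_i,σ_j) - Σ_i Σ_α M_{i,α} δ(α,σ_i)`. -/
noncomputable def pottsH (q : ℕ) (G : WGraph (Fin q → ℂ) ℂ) (σ : G.V → Fin q) : ℂ :=
  -(∑ e : G.E, G.γ e * (if σ (G.ends e).1 = σ (G.ends e).2 then 1 else 0))
    - ∑ v : G.V, ∑ α : Fin q, G.ω v α * (if α = σ v then 1 else 0)

/-- The variable-field q-state Potts partition function `Z(G) = Σ_σ e^{-β h(σ)}`. -/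
noncomputable def pottsZ (q : ℕ) (β : ℂ) (G : WGraph (Fin q → ℂ) ℂ) : ℂ :=
  ∑ σ : G.V → Fin q, Complex.exp (-β * pottsH q G σ)

-- auxiliary
theorem prodSplit {α : Type} [Fintype α] [DecidableEq α] {M : Type} [CommMonoid M] (b : α)
    (f : α → M) : ∏ v, f v = f b * ∏ v : {v // v ≠ b}, f v.1 := by
  rw [← Finset.mul_prod_erase Finset.univ f (Finset.mem_univ b)]
  congr 1
  exact Finset.prod_subtype (p := (· ≠ b)) (Finset.univ.erase b) (fun x => by simp) f

noncomputable def pottsW (q : ℕ) (β : ℂ) (G : WGraph (Fin q → ℂ) ℂ) (σ : G.V → Fin q) : ℂ :=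
  (∏ e : G.E, if σ (G.ends e).1 = σ (G.ends e).2 then Complex.exp (β * G.γ e) else 1)
  * ∏ v : G.V, Complex.exp (β * G.ω v (σ v))

theorem pottsZ_eq_sum_W (q : ℕ) (β : ℂ) (G : WGraph (Fin q → ℂ) ℂ) :
    pottsZ q β G = ∑ σ : G.V → Fin q, pottsW q β G σ := by
  unfold pottsZ pottsW pottsH
  refine Finset.sum_congr rfl (fun σ _ => ?_)
  have h1 : -β * (-(∑ e : G.E, G.γ e * (if σ (G.ends e).1 = σ (G.ends e).2 then 1 else 0))
      - ∑ v : G.V, ∑ α : Fin q, G.ω v α * (if α = σ v then 1 else 0))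
      = (∑ e : G.E, β * (G.γ e * (if σ (G.ends e).1 = σ (G.ends e).2 then 1 else 0)))
      + ∑ v : G.V, β * (∑ α : Fin q, G.ω v α * (if α = σ v then 1 else 0)) := by
    rw [← Finset.mul_sum, ← Finset.mul_sum]; ring
  rw [h1, Complex.exp_add, Complex.exp_sum, Complex.exp_sum]
  congr 1
  · refine Finset.prod_congr rfl (fun e _ => ?_)
    by_cases h : σ (G.ends e).1 = σ (G.ends e).2 <;> simp [h]
  · refine Finset.prod_congr rfl (fun v _ => ?_)
    congr 1
    have : (∑ α : Fin q, G.ω v α * (if α = σ v then 1 else 0)) = G.ω v (σ v) := by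
      simp [mul_ite]
    rw [this]

theorem sumExpSplit (q r : ℕ) (hr : r ≤ q) (β : ℂ) (M : Fin q → ℂ)
    (hM : ∀ α : Fin q, r ≤ (α : ℕ) → M α = 0) :
    (∑ α : Fin q, Complex.exp (β * M α))
      = ((q : ℂ) - (r : ℂ)) + ∑ α : Fin q, if (α : ℕ) < r then Complex.exp (β * M α) else 0 := by
  have h1 : ∀ α : Fin q, Complex.exp (β * M α)
      = (if (α : ℕ) < r then Complex.exp (β * M α) else 0) + (if (α : ℕ) < r then 0 else 1) := by
    intro α
    by_cases h : (α : ℕ) < r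
    · simp [h]
    · simp [h, hM α (le_of_not_gt h)]
  rw [Finset.sum_congr rfl (fun α _ => h1 α), Finset.sum_add_distrib]
  have h2 : (∑ α : Fin q, if (α : ℕ) < r then (0 : ℂ) else 1) = (q : ℂ) - (r : ℂ) := by
    rw [Fin.sum_univ_eq_sum_range (fun i => if i < r then (0 : ℂ) else 1) q]
    have h4 : ∀ i, (if i < r then (0 : ℂ) else 1) = 1 - (if i < r then 1 else 0) := by
      intro i; by_cases h : i < r <;> simp [h]
    rw [Finset.sum_congr rfl (fun i _ => h4 i), Finset.sum_sub_distrib, Finset.sum_const,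
      Finset.card_range]
    have h5 : (∑ i ∈ Finset.range q, if i < r then (1 : ℂ) else 0) = (r : ℂ) := by
      have hf : (Finset.range q).filter (· < r) = Finset.range r := by
        ext i
        simp only [Finset.mem_filter, Finset.mem_range]
        omega
      rw [← Finset.sum_filter, hf, Finset.sum_const, Finset.card_range]
      simp
    rw [h5]; simp
  rw [h2]; ring

theorem pottsW_delete (q : ℕ) (β : ℂ) (G : WGraph (Fin q → ℂ) ℂ) (e₀ : G.E)
    (σ : G.V → Fin q) :
    pottsW q β G σ
      = (if σ (G.ends e₀).1 = σ (G.ends e₀).2 then Complex.exp (β * G.γ e₀) else 1)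
        * pottsW q β (G.delete e₀) σ := by
  unfold pottsW WGraph.delete
  rw [prodSplit e₀ (fun e => if σ (G.ends e).1 = σ (G.ends e).2 then Complex.exp (β * G.γ e) else 1)]
  ring

theorem pottsW_contract (q : ℕ) (β : ℂ) (G : WGraph (Fin q → ℂ) ℂ) (e₀ : G.E)
    (h : ¬ G.IsLoop e₀) (σ : G.V → Fin q)
    (hσ : σ (G.ends e₀).1 = σ (G.ends e₀).2) :
    pottsW q β (G.delete e₀) σ
      = pottsW q β (G.contract e₀ h) (fun v => σ v.1) := by
  unfold pottsW WGraph.delete WGraph.contract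
  simp only []
  congr 1
  · refine Finset.prod_congr rfl (fun e _ => ?_)
    have h1 : σ (if hv : (G.ends e.1).1 = (G.ends e₀).2 then
        (⟨(G.ends e₀).1, h⟩ : {v : G.V // v ≠ (G.ends e₀).2}) else ⟨(G.ends e.1).1, hv⟩).1
        = σ (G.ends e.1).1 := by
      split
      · next hv => rw [hσ, ← hv]
      · rfl
    have h2 : σ (if hv : (G.ends e.1).2 = (G.ends e₀).2 then
        (⟨(G.ends e₀).1, h⟩ : {v : G.V // v ≠ (G.ends e₀).2}) else ⟨(G.ends e.1).2, hv⟩).1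
        = σ (G.ends e.1).2 := by
      split
      · next hv => rw [hσ, ← hv]
      · rfl
    rw [h1, h2]
  · -- vertex part
    rw [prodSplit (G.ends e₀).2 (fun v => Complex.exp (β * G.ω v (σ v)))]
    have key : ∀ v : {v : G.V // v ≠ (G.ends e₀).2},
        Complex.exp (β * (if v.1 = (G.ends e₀).1
            then G.ω (G.ends e₀).1 + G.ω (G.ends e₀).2 else G.ω v.1) (σ v.1))
        = Complex.exp (β * G.ω v.1 (σ v.1))
          * (if v = (⟨(G.ends e₀).1, h⟩ : {v : G.V // v ≠ (G.ends e₀).2})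
              then Complex.exp (β * G.ω (G.ends e₀).2 (σ v.1)) else 1) := by
      intro v
      by_cases hv : v.1 = (G.ends e₀).1
      · have hv' : v = (⟨(G.ends e₀).1, h⟩ : {v : G.V // v ≠ (G.ends e₀).2}) :=
          Subtype.ext hv
        rw [if_pos hv, if_pos hv', Pi.add_apply, mul_add, Complex.exp_add, hv]
      · have hv' : v ≠ (⟨(G.ends e₀).1, h⟩ : {v : G.V // v ≠ (G.ends e₀).2}) := by
          intro hc; exact hv (by rw [hc])
        rw [if_neg hv, if_neg hv', mul_one]
    rw [Finset.prod_congr rfl (fun v _ => key v), Finset.prod_mul_distrib,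
      Finset.prod_ite_eq' Finset.univ (⟨(G.ends e₀).1, h⟩ : {v : G.V // v ≠ (G.ends e₀).2})
        (fun v => Complex.exp (β * G.ω (G.ends e₀).2 (σ v.1))), if_pos (Finset.mem_univ _)]
    rw [hσ]
    ring

theorem sum_W_contract (q : ℕ) (β : ℂ) (G : WGraph (Fin q → ℂ) ℂ) (e₀ : G.E)
    (h : ¬ G.IsLoop e₀) :
    (∑ σ : G.V → Fin q,
        if σ (G.ends e₀).1 = σ (G.ends e₀).2 then pottsW q β (G.delete e₀) σ else 0)
      = ∑ σ : (G.contract e₀ h).V → Fin q, pottsW q β (G.contract e₀ h) σ := by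
  erw [← Finset.sum_filter]
  refine Finset.sum_bij' (fun σ _ => fun v => σ v.1)
    (fun σ' _ => fun v => if hv : v = (G.ends e₀).2 then σ' ⟨(G.ends e₀).1, h⟩ else σ' ⟨v, hv⟩)
    ?_ ?_ ?_ ?_ ?_
  · intro σ hσ; exact Finset.mem_univ _
  · intro σ' hσ'
    rw [Finset.mem_filter]
    refine ⟨Finset.mem_univ _, ?_⟩
    have hab : (G.ends e₀).1 ≠ (G.ends e₀).2 := h
    beta_reduce
    rw [dif_neg hab, dif_pos rfl]
  · intro σ hσ
    rw [Finset.mem_filter] at hσ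
    funext v
    beta_reduce
    by_cases hv : v = (G.ends e₀).2
    · rw [dif_pos hv, hv, ← hσ.2]
    · rw [dif_neg hv]
  · intro σ' hσ'
    funext v
    beta_reduce
    rw [dif_neg v.2]
    exact congrArg σ' (Subtype.ext rfl)
  · intro σ hσ
    rw [Finset.mem_filter] at hσ
    exact pottsW_contract q β G e₀ h σ hσ.2

theorem card_subtype_ne' {α : Type} [Fintype α] [DecidableEq α] (e₀ : α) :
    Fintype.card {e : α // e ≠ e₀} = Fintype.card α - 1 := by
  rw [Fintype.card_subtype, Finset.filter_ne', Finset.card_erase_of_mem (Finset.mem_univ _),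
    Finset.card_univ]

theorem pottsZ_partial_field_eq_V' (q r : ℕ) (hr : r ≤ q) (β : ℂ)
    (Vpoly : WGraph (Fin q → ℂ) ℂ → ℂ)
    (hV1 : ∀ (G : WGraph (Fin q → ℂ) ℂ) (e : G.E) (h : ¬ G.IsLoop e),
      Vpoly G = Vpoly (G.delete e) + G.γ e * Vpoly (G.contract e h))
    (hV2 : ∀ (G : WGraph (Fin q → ℂ) ℂ) (e : G.E), G.IsLoop e →
      Vpoly G = (G.γ e + 1) * Vpoly (G.delete e))
    (hV3 : ∀ G : WGraph (Fin q → ℂ) ℂ, IsEmpty G.E →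
      Vpoly G = ∏ v : G.V,
        (((q : ℂ) - (r : ℂ)) +
          ∑ α : Fin q, if (α : ℕ) < r then Complex.exp (β * G.ω v α) else 0)) :
    ∀ G : WGraph (Fin q → ℂ) ℂ,
      (∀ (v : G.V) (α : Fin q), r ≤ (α : ℕ) → G.ω v α = 0) →
      pottsZ q β G = Vpoly (G.mapEdges (fun J => Complex.exp (β * J) - 1)) := by
  suffices hmain : ∀ (n : ℕ) (G : WGraph (Fin q → ℂ) ℂ), Fintype.card G.E = n →
      (∀ (v : G.V) (α : Fin q), r ≤ (α : ℕ) → G.ω v α = 0) →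
      pottsZ q β G = Vpoly (G.mapEdges (fun J => Complex.exp (β * J) - 1)) by
    intro G hG; exact hmain _ G rfl hG
  intro n
  induction n with
  | zero =>
    intro G hcard hG
    have hE : IsEmpty G.E := Fintype.card_eq_zero_iff.mp hcard
    have key : (∑ σ : G.V → Fin q, pottsW q β G σ)
        = ∏ v : G.V, (((q : ℂ) - (r : ℂ))
            + ∑ α : Fin q, if (α : ℕ) < r then Complex.exp (β * G.ω v α) else 0) := by
      have h1 : ∀ σ : G.V → Fin q,
          pottsW q β G σ = ∏ v : G.V, Complex.exp (β * G.ω v (σ v)) := by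
        intro σ
        unfold pottsW
        rw [Finset.univ_eq_empty, Finset.prod_empty, one_mul]
      rw [Finset.sum_congr rfl (fun σ _ => h1 σ)]
      have h2 : (∏ v : G.V, ∑ α : Fin q, Complex.exp (β * G.ω v α))
          = ∑ σ : G.V → Fin q, ∏ v : G.V, Complex.exp (β * G.ω v (σ v)) := by
        rw [Finset.prod_univ_sum, Fintype.piFinset_univ]
      rw [← h2]
      exact Finset.prod_congr rfl (fun v _ => sumExpSplit q r hr β (G.ω v) (hG v))
    rw [pottsZ_eq_sum_W, key, hV3 (G.mapEdges (fun J => Complex.exp (β * J) - 1)) hE]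
    rfl
  | succ n ih =>
    intro G hcard hG
    have hne : Nonempty G.E := Fintype.card_pos_iff.mp (by omega)
    obtain ⟨e₀⟩ := hne
    have hcard' : Fintype.card {e : G.E // e ≠ e₀} = n := by
      rw [card_subtype_ne', hcard]
      omega
    have hsumdel : (∑ σ : G.V → Fin q, pottsW q β (G.delete e₀) σ)
        = pottsZ q β (G.delete e₀) := (pottsZ_eq_sum_W q β (G.delete e₀)).symm
    by_cases hloop : G.IsLoop e₀
    · -- loop case
      have h1 : ∀ σ : G.V → Fin q,
          pottsW q β G σ = Complex.exp (β * G.γ e₀) * pottsW q β (G.delete e₀) σ := by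
        intro σ
        rw [pottsW_delete q β G e₀ σ, if_pos (congrArg σ hloop)]
      rw [pottsZ_eq_sum_W, Finset.sum_congr rfl (fun σ _ => h1 σ)]
      erw [← Finset.mul_sum]
      rw [
        hsumdel, ih (G.delete e₀) hcard' hG, hV2 (G.mapEdges (fun J => Complex.exp (β * J) - 1)) e₀ hloop]
      have h2 : ((G.mapEdges (fun J => Complex.exp (β * J) - 1)).delete e₀)
          = (G.delete e₀).mapEdges (fun J => Complex.exp (β * J) - 1) := rfl
      rw [h2]
      congr 1
      show Complex.exp (β * G.γ e₀) = (Complex.exp (β * G.γ e₀) - 1) + 1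
      ring
    · -- non-loop case
      have hsplit : ∀ σ : G.V → Fin q, pottsW q β G σ
          = pottsW q β (G.delete e₀) σ
            + (Complex.exp (β * G.γ e₀) - 1)
              * (if σ (G.ends e₀).1 = σ (G.ends e₀).2 then pottsW q β (G.delete e₀) σ else 0) := by
        intro σ
        rw [pottsW_delete q β G e₀ σ]
        by_cases hc : σ (G.ends e₀).1 = σ (G.ends e₀).2
        · rw [if_pos hc, if_pos hc]; ring
        · rw [if_neg hc, if_neg hc]; ring
      have hGc : ∀ (v : (G.contract e₀ hloop).V) (α : Fin q), r ≤ (α : ℕ) →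
          (G.contract e₀ hloop).ω v α = 0 := by
        intro v α hα
        show (if v.1 = (G.ends e₀).1 then G.ω (G.ends e₀).1 + G.ω (G.ends e₀).2
            else G.ω v.1) α = 0
        split
        · rw [Pi.add_apply, hG _ α hα, hG _ α hα, add_zero]
        · exact hG _ α hα
      rw [pottsZ_eq_sum_W, Finset.sum_congr rfl (fun σ _ => hsplit σ)]
      erw [Finset.sum_add_distrib,
        ← Finset.mul_sum]
      rw [sum_W_contract q β G e₀ hloop, hsumdel, ← pottsZ_eq_sum_W,
        ih (G.delete e₀) hcard' hG, ih (G.contract e₀ hloop) hcard' hGc,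
        hV1 (G.mapEdges (fun J => Complex.exp (β * J) - 1)) e₀ hloop]
      have h2 : ((G.mapEdges (fun J => Complex.exp (β * J) - 1)).delete e₀)
          = (G.delete e₀).mapEdges (fun J => Complex.exp (β * J) - 1) := rfl
      have h3 : ((G.mapEdges (fun J => Complex.exp (β * J) - 1)).contract e₀ hloop)
          = (G.contract e₀ hloop).mapEdges (fun J => Complex.exp (β * J) - 1) := rfl
      rw [h2, h3]
      rfl

/-- partial-field model, Sokal: if the last `q - r` coordinates of every
magnetic field vector vanish, then `Z(G)` is the evaluation of the V-polynomial at
`x_M = (q-r) + Σ_{α=1}^r e^{βM_α}` and `γ_e = e^{βJ_e} - 1`. -/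
theorem pottsZ_partial_field_eq_V (q r : ℕ) (hr : r ≤ q) (β : ℂ)
    (Vpoly : WGraph (Fin q → ℂ) ℂ → ℂ)
    (hV1 : ∀ (G : WGraph (Fin q → ℂ) ℂ) (e : G.E) (h : ¬ G.IsLoop e),
      Vpoly G = Vpoly (G.delete e) + G.γ e * Vpoly (G.contract e h))
    (hV2 : ∀ (G : WGraph (Fin q → ℂ) ℂ) (e : G.E), G.IsLoop e →
      Vpoly G = (G.γ e + 1) * Vpoly (G.delete e))
    (hV3 : ∀ G : WGraph (Fin q → ℂ) ℂ, IsEmpty G.E →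
      Vpoly G = ∏ v : G.V,
        (((q : ℂ) - (r : ℂ)) +
          ∑ α : Fin q, if (α : ℕ) < r then Complex.exp (β * G.ω v α) else 0)) :
    ∀ G : WGraph (Fin q → ℂ) ℂ,
      (∀ (v : G.V) (α : Fin q), r ≤ (α : ℕ) → G.ω v α = 0) →
      pottsZ q β G = Vpoly (G.mapEdges (fun J => Complex.exp (β * J) - 1)) :=
  pottsZ_partial_field_eq_V' q r hr β Vpoly hV1 hV2 hV3
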